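/- Let n ≥ 1 and τ be integers with 1 ≤ τ < ⌊n/2⌋. Then there exist simple graphs G_1, …, G_τ on a common vertex set V of size n such that: (i) each G_i is connected; (ii) the union of the edge sets of G_1, …, G_τ equals the edge set of the complete graph on V; and (iii) every vertex has degree at most ⌈n/τ⌉ in each G_i. -/

import Mathlib

private lemma ceil_bounds (a b : ℕ) (hb : 1 ≤ b) :
    a ≤ ((a + b - 1) / b) * b ∧ ((a + b - 1) / b) * b ≤ a + b - 1 := by
  have h1 := Nat.div_add_mod (a + b - 1) b
  have h2 := Nat.mod_lt (a + b - 1) (show 0 < b by omega)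
  constructor
  · rw [mul_comm]; omega
  · rw [mul_comm]; omega

private lemma arc_spec (n τ i : ℕ) (hτ : 1 ≤ τ) (hi : i < τ) (hn : 2*τ+2 ≤ n) :
    (i*n + τ - 1)/τ + 1 < n ∧ ((i*n + τ - 1)/τ)*τ/n = i ∧ ((i*n + τ - 1)/τ + 1)*τ/n = i := by
  obtain ⟨hA, hB⟩ := ceil_bounds (i*n) τ hτ
  set s := (i*n + τ - 1)/τ with hs
  have hs1 : (s+1)*τ = s*τ + τ := by ring
  have hin : (i+1)*n = i*n + n := by ring
  have hE : (s+1)*τ < (i+1)*n := by omega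
  have hD : s*τ < (i+1)*n := by omega
  have hG : s + 1 < n := by
    have h2 : (i+1)*n ≤ τ*n := Nat.mul_le_mul_right n (by omega)
    have h3 : (s+1)*τ < n*τ := by rw [mul_comm n τ]; omega
    exact Nat.lt_of_mul_lt_mul_right h3
  refine ⟨hG, Nat.div_eq_of_lt_le hA hD, Nat.div_eq_of_lt_le (by omega) hE⟩

private lemma class_range (n τ i x : ℕ) (hτ : 1 ≤ τ) (hn : 2*τ+2 ≤ n) (hx : x*τ/n = i) :
    (i*n + τ - 1)/τ ≤ x ∧ x - (i*n + τ - 1)/τ ≤ (n-1)/τ := by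
  have hn0 : 0 < n := by omega
  have hlo : i*n ≤ x*τ := (Nat.le_div_iff_mul_le hn0).mp (le_of_eq hx.symm)
  have hhi : x*τ < (i+1)*n := (Nat.div_lt_iff_lt_mul hn0).mp (by omega)
  obtain ⟨hA, hB⟩ := ceil_bounds (i*n) τ hτ
  set s := (i*n + τ - 1)/τ with hs
  have hin : (i+1)*n = i*n + n := by ring
  have hsx : s ≤ x := by
    by_contra hc
    push_neg at hc
    have h4 : (x+1)*τ ≤ s*τ := Nat.mul_le_mul_right τ hc
    have h5 : (x+1)*τ = x*τ + τ := by ring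
    omega
  refine ⟨hsx, ?_⟩
  have h6 : (x - s)*τ = x*τ - s*τ := Nat.sub_mul x s τ
  have h7 : (x - s)*τ ≤ n - 1 := by omega
  exact (Nat.le_div_iff_mul_le (by omega)).mpr h7

open Fin.CommRing in
theorem exists_connected_layers_cover_complete (n τ : ℕ) (hn : 1 ≤ n)
    (hτ1 : 1 ≤ τ) (hτ2 : τ < n / 2) :
    ∃ G : Fin τ → SimpleGraph (Fin n),
      (∀ i, (G i).Connected) ∧
      (⨆ i, G i) = ⊤ ∧
      (∀ i, ∀ v : Fin n, ((G i).neighborSet v).ncard ≤ Nat.ceil ((n : ℚ) / (τ : ℚ))) := by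
  classical
  have hn2 : 2 * τ + 2 ≤ n := by omega
  haveI : NeZero n := ⟨by omega⟩
  let G : Fin τ → SimpleGraph (Fin n) := fun i =>
    { Adj := fun u v => u ≠ v ∧ (u + v).val * τ / n = i.val
      symm := by
        refine ⟨fun u v h => ?_⟩
        exact ⟨Ne.symm h.1, by rw [add_comm v u]; exact h.2⟩
      loopless := ⟨fun v h => h.1 rfl⟩ }
  have hGadj : ∀ i u v, (G i).Adj u v ↔ (u ≠ v ∧ (u + v).val * τ / n = i.val) :=
    fun _ _ _ => Iff.rfl
  have hone : (1 : Fin n).val = 1 := by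
    rw [Fin.val_one']; exact Nat.mod_eq_of_lt (by omega)
  have hne : ∀ u : Fin n, u ≠ u + 1 := by
    intro u h
    have h2 : u + 0 = u + 1 := by rw [add_zero]; exact h
    have h3 : (0 : Fin n) = 1 := add_left_cancel h2
    have := congrArg Fin.val h3
    rw [hone] at this
    simp at this
  refine ⟨G, ?_, ?_, ?_⟩
  · -- connectivity
    intro i
    obtain ⟨hsn, hds, hds1⟩ := arc_spec n τ i.val hτ1 i.isLt hn2
    set s : ℕ := (i.val * n + τ - 1)/τ with hs
    set S : Fin n := ⟨s, by omega⟩ with hS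
    have hSval : (S + 1).val = s + 1 := by
      rw [Fin.val_add, hone]
      show (s + 1) % n = s + 1
      exact Nat.mod_eq_of_lt hsn
    have hstep : ∀ u : Fin n, (G i).Reachable u (u + 1) := by
      intro u
      by_cases hcase : (u + (u + 1)).val * τ / n = i.val
      · exact (SimpleGraph.Adj.reachable ((hGadj i u (u+1)).mpr ⟨hne u, hcase⟩))
      · have hw1 : (G i).Adj u (S - u) := by
          refine (hGadj i u (S - u)).mpr ⟨?_, ?_⟩
          · intro h
            apply hcase
            have h2 : u + u = S := eq_sub_iff_add_eq.mp h
            have h3 : u + (u + 1) = S + 1 := by rw [← h2]; ring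
            rw [h3, hSval]
            exact hds1
          · have h4 : u + (S - u) = S := by ring
            rw [h4]
            exact hds
        have hw2 : (G i).Adj (S - u) (u + 1) := by
          refine (hGadj i (S - u) (u+1)).mpr ⟨?_, ?_⟩
          · intro h
            apply hcase
            have h2 : S = u + 1 + u := sub_eq_iff_eq_add.mp h
            have h3 : u + (u + 1) = S := by rw [h2]; ring
            rw [h3]
            exact hds
          · have h4 : (S - u) + (u + 1) = S + 1 := by ring
            rw [h4, hSval]
            exact hds1
        exact (hw1.reachable.trans hw2.reachable)
    have hreach : ∀ (k : ℕ) (u : Fin n), (G i).Reachable u (u + (k : Fin n)) := by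
      intro k
      induction k with
      | zero => intro u; rw [Nat.cast_zero, add_zero]
      | succ k ih =>
        intro u
        have hc : ((k + 1 : ℕ) : Fin n) = (k : Fin n) + 1 := by push_cast; ring
        rw [hc, ← add_assoc]
        exact (ih u).trans (hstep (u + (k : Fin n)))
    rw [SimpleGraph.connected_iff]
    refine ⟨?_, ⟨⟨0, by omega⟩⟩⟩
    intro u v
    have h5 := hreach (v - u).val u
    rw [Fin.cast_val_eq_self] at h5
    have h6 : u + (v - u) = v := by ring
    rwa [h6] at h5
  · -- covering
    ext u v
    simp only [SimpleGraph.iSup_adj, SimpleGraph.top_adj]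
    constructor
    · rintro ⟨i, hi⟩
      exact hi.1
    · intro huv
      have hlt : (u + v).val * τ / n < τ := by
        have h1 : (u + v).val * τ < n * τ :=
          Nat.mul_lt_mul_of_lt_of_le (u + v).isLt (le_refl τ) (by omega)
        refine (Nat.div_lt_iff_lt_mul (by omega)).mpr ?_
        rw [mul_comm τ n]
        exact h1
      exact ⟨⟨_, hlt⟩, huv, rfl⟩
  · -- degree bound
    intro i v
    have hceil : (n - 1)/τ + 1 ≤ Nat.ceil ((n : ℚ) / (τ : ℚ)) := by
      have h := Nat.div_mul_le_self (n - 1) τ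
      have h2 : (n - 1)/τ * τ < n := by omega
      have h3 : (((n - 1)/τ : ℕ) : ℚ) < (n : ℚ) / (τ : ℚ) := by
        rw [lt_div_iff₀ (by positivity)]
        exact_mod_cast h2
      have := Nat.lt_ceil.mpr h3
      omega
    refine le_trans ?_ hceil
    set s : ℕ := (i.val * n + τ - 1)/τ with hs
    have hset : (G i).neighborSet v = ↑(Finset.univ.filter fun u => (G i).Adj v u) := by
      ext u
      simp [SimpleGraph.neighborSet]
    rw [hset, Set.ncard_coe_finset]
    calc (Finset.univ.filter fun u => (G i).Adj v u).card
        ≤ (Finset.range ((n - 1)/τ + 1)).card := by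
          apply Finset.card_le_card_of_injOn (fun u => (v + u).val - s)
          · intro u hu
            rw [Finset.mem_coe, Finset.mem_filter] at hu
            obtain ⟨hlo, hhi⟩ := class_range n τ i.val (v + u).val hτ1 hn2 hu.2.2
            simp only [Finset.mem_coe, Finset.mem_range]
            omega
          · intro u hu u' hu' heq
            simp only [Finset.coe_filter, Set.mem_setOf_eq] at hu hu'
            obtain ⟨hlo, _⟩ := class_range n τ i.val (v + u).val hτ1 hn2 hu.2.2
            obtain ⟨hlo', _⟩ := class_range n τ i.val (v + u').val hτ1 hn2 hu'.2.2
            have heq2 : (v + u).val - s = (v + u').val - s := heq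
            have hval : (v + u).val = (v + u').val := by omega
            have : v + u = v + u' := Fin.val_injective hval
            exact add_left_cancel this
      _ = (n - 1)/τ + 1 := Finset.card_range _
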